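/- arXiv:1612.08387 — 5 statements merged into one kernel-verified Lean document; each statement's English description precedes it below -/
import Mathlib

section
/- Let μ be a measure on (x₁, b) (with x₁ < b ≤ ∞), let f, g : (x₁, b) → (0, ∞) be measurable, and let r, s > 0, c_f, c_g ∈ ℝ be constants. Suppose ∫_{(x₁, x]} g dμ → ∞ as x → b⁻, that lim_{x→b⁻} f(x)/g(x) = L exists in [0, ∞), and that for all x ∈ (x₁, b), F(x) = c_f + r ∫_{(x₁,x]} f dμ and G(x) = c_g + s ∫_{(x₁,x]} g dμ with G(x) > 0 eventually. If additionally lim_{x→b⁻} F(x)/G(x) = L, then L = (r/s) L, and hence, when r ≠ s, L = 0. -/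
open Filter Set Topology MeasureTheory
open scoped ENNReal

/-- The filter of real numbers tending to the (possibly infinite) extended-real
endpoint `b` from the left. -/
noncomputable def leftLimFilter (b : EReal) : Filter ℝ :=
  Filter.comap (fun x : ℝ => (x : EReal)) (nhdsWithin b (Set.Iio b))
lemma llf_ev {b : EReal} {P : ℝ → Prop} (a : ℝ) (hab : (a : EReal) < b)
    (h : ∀ x : ℝ, a < x → (x : EReal) < b → P x) :
    ∀ᶠ x in leftLimFilter b, P x := by
  have hmem : Set.Ioo (a : EReal) b ∈ nhdsWithin b (Set.Iio b) :=
    Ioo_mem_nhdsLT hab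
  refine Filter.eventually_of_mem (Filter.preimage_mem_comap hmem) ?_
  intro x hx
  exact h x (EReal.coe_lt_coe_iff.1 hx.1) hx.2

lemma llf_extract {x₁ : ℝ} {b : EReal} (hb : (x₁ : EReal) < b) {P : ℝ → Prop}
    (h : ∀ᶠ x in leftLimFilter b, P x) :
    ∃ a : ℝ, x₁ < a ∧ (a : EReal) < b ∧ ∀ x : ℝ, a < x → (x : EReal) < b → P x := by
  rw [leftLimFilter, Filter.eventually_comap] at h
  obtain ⟨T, hT, hTP⟩ := Filter.Eventually.exists_mem h
  obtain ⟨l, hl, hsub⟩ := (mem_nhdsLT_iff_exists_Ioo_subset' hb).1 hT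
  have hmax : max l (x₁ : EReal) < b := max_lt hl hb
  obtain ⟨a, ha1, ha2⟩ := EReal.lt_iff_exists_real_btwn.1 hmax
  refine ⟨a, ?_, ha2, ?_⟩
  · exact_mod_cast (le_max_right l (x₁ : EReal)).trans_lt ha1
  · intro x hax hxb
    have hx : (x : EReal) ∈ Set.Ioo l b :=
      ⟨(le_max_left l _).trans_lt (ha1.trans (by exact_mod_cast hax)), hxb⟩
    exact hTP _ (hsub hx) x rfl

lemma llf_neBot {x₁ : ℝ} {b : EReal} (hb : (x₁ : EReal) < b) :
    (leftLimFilter b).NeBot := by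
  refine Filter.comap_neBot fun t ht => ?_
  obtain ⟨l, hl, hsub⟩ := (mem_nhdsLT_iff_exists_Ioo_subset' hb).1 ht
  obtain ⟨a, ha1, ha2⟩ := EReal.lt_iff_exists_real_btwn.1 hl
  exact ⟨a, hsub ⟨ha1, ha2⟩⟩

lemma cesaro_integral {x₁ : ℝ} {b : EReal} (hb : (x₁ : EReal) < b)
    (μ : Measure ℝ) (f g : ℝ → ℝ)
    (hg_pos : ∀ x : ℝ, x₁ < x → (x : EReal) < b → 0 < g x)
    (hf_int : ∀ x : ℝ, x₁ < x → (x : EReal) < b → IntegrableOn f (Set.Ioc x₁ x) μ)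
    (hg_int : ∀ x : ℝ, x₁ < x → (x : EReal) < b → IntegrableOn g (Set.Ioc x₁ x) μ)
    (hg_top : Tendsto (fun x => ∫ y in Set.Ioc x₁ x, g y ∂μ) (leftLimFilter b) atTop)
    (L : ℝ)
    (hL : Tendsto (fun x => f x / g x) (leftLimFilter b) (nhds L)) :
    Tendsto (fun x => (∫ y in Set.Ioc x₁ x, f y ∂μ) / ∫ y in Set.Ioc x₁ x, g y ∂μ)
      (leftLimFilter b) (nhds L) := by
  rw [Metric.tendsto_nhds] at hL ⊢
  intro ε hε
  have hε3 : 0 < ε / 3 := by linarith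
  obtain ⟨x₀, hx₀1, hx₀b, hx₀⟩ := llf_extract hb (hL (ε / 3) hε3)
  set A := ∫ y in Set.Ioc x₁ x₀, f y ∂μ with hA
  set B := ∫ y in Set.Ioc x₁ x₀, g y ∂μ with hB
  set C := |A - L * B| with hC
  have hBnn : 0 ≤ B := by
    refine setIntegral_nonneg measurableSet_Ioc fun y hy => ?_
    exact (hg_pos y hy.1 ((EReal.coe_le_coe_iff.2 hy.2).trans_lt hx₀b)).le
  have hev1 : ∀ᶠ x in leftLimFilter b, max 1 (C / (ε / 3)) ≤ ∫ y in Set.Ioc x₁ x, g y ∂μ :=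
    hg_top.eventually_ge_atTop _
  have hev2 : ∀ᶠ x in leftLimFilter b, x₀ < x ∧ (x : EReal) < b :=
    llf_ev x₀ hx₀b fun x h1 h2 => ⟨h1, h2⟩
  filter_upwards [hev1, hev2] with x hIg hx
  obtain ⟨hx0x, hxb⟩ := hx
  set If := ∫ y in Set.Ioc x₁ x, f y ∂μ with hIf
  set Ig := ∫ y in Set.Ioc x₁ x, g y ∂μ with hIgdef
  have hx₁x : x₁ < x := hx₀1.trans hx0x
  have hintf : IntegrableOn f (Set.Ioc x₁ x) μ := hf_int x hx₁x hxb
  have hintg : IntegrableOn g (Set.Ioc x₁ x) μ := hg_int x hx₁x hxb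
  have hintf2 : IntegrableOn f (Set.Ioc x₀ x) μ :=
    hintf.mono_set (Set.Ioc_subset_Ioc_left hx₀1.le)
  have hintg2 : IntegrableOn g (Set.Ioc x₀ x) μ :=
    hintg.mono_set (Set.Ioc_subset_Ioc_left hx₀1.le)
  have hintf1 : IntegrableOn f (Set.Ioc x₁ x₀) μ :=
    hintf.mono_set (Set.Ioc_subset_Ioc_right hx0x.le)
  have hintg1 : IntegrableOn g (Set.Ioc x₁ x₀) μ :=
    hintg.mono_set (Set.Ioc_subset_Ioc_right hx0x.le)
  have hunion : Set.Ioc x₁ x₀ ∪ Set.Ioc x₀ x = Set.Ioc x₁ x :=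
    Set.Ioc_union_Ioc_eq_Ioc hx₀1.le hx0x.le
  have hsplitf : If = A + ∫ y in Set.Ioc x₀ x, f y ∂μ := by
    rw [hIf, ← hunion, setIntegral_union (Set.Ioc_disjoint_Ioc_of_le le_rfl) measurableSet_Ioc hintf1 hintf2]
  have hsplitg : Ig = B + ∫ y in Set.Ioc x₀ x, g y ∂μ := by
    rw [hIgdef, ← hunion, setIntegral_union (Set.Ioc_disjoint_Ioc_of_le le_rfl) measurableSet_Ioc hintg1 hintg2]
  have h2gnn : 0 ≤ ∫ y in Set.Ioc x₀ x, g y ∂μ := by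
    refine setIntegral_nonneg measurableSet_Ioc fun y hy => ?_
    exact (hg_pos y (hx₀1.trans hy.1) ((EReal.coe_le_coe_iff.2 hy.2).trans_lt hxb)).le
  have hpt : ∀ y ∈ Set.Ioc x₀ x, |f y - L * g y| ≤ ε / 3 * g y := by
    intro y hy
    have hyb : (y : EReal) < b := (EReal.coe_le_coe_iff.2 hy.2).trans_lt hxb
    have hgy : 0 < g y := hg_pos y (hx₀1.trans hy.1) hyb
    have hd := hx₀ y hy.1 hyb
    rw [Real.dist_eq] at hd
    have hfy : f y - L * g y = (f y / g y - L) * g y := by field_simp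
    rw [hfy, abs_mul, abs_of_pos hgy]
    exact mul_le_mul_of_nonneg_right hd.le hgy.le
  have hest : |(∫ y in Set.Ioc x₀ x, f y ∂μ) - L * ∫ y in Set.Ioc x₀ x, g y ∂μ|
      ≤ ε / 3 * ∫ y in Set.Ioc x₀ x, g y ∂μ := by
    have h1 : (∫ y in Set.Ioc x₀ x, f y ∂μ) - L * ∫ y in Set.Ioc x₀ x, g y ∂μ
        = ∫ y in Set.Ioc x₀ x, (f y - L * g y) ∂μ := by
      rw [integral_sub hintf2 (hintg2.const_mul L), integral_const_mul]
    rw [h1]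
    calc |∫ y in Set.Ioc x₀ x, (f y - L * g y) ∂μ|
        ≤ ∫ y in Set.Ioc x₀ x, |f y - L * g y| ∂μ := by
          simpa [Real.norm_eq_abs] using
            norm_integral_le_integral_norm (μ := μ.restrict (Set.Ioc x₀ x))
              (f := fun y => f y - L * g y)
      _ ≤ ∫ y in Set.Ioc x₀ x, ε / 3 * g y ∂μ := by
          refine setIntegral_mono_on ((hintf2.sub (hintg2.const_mul L)).abs)
            (hintg2.const_mul (ε / 3)) measurableSet_Ioc hpt
      _ = ε / 3 * ∫ y in Set.Ioc x₀ x, g y ∂μ := integral_const_mul _ _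
  have hIg1 : (1 : ℝ) ≤ Ig := (le_max_left _ _).trans hIg
  have hIg0 : (0 : ℝ) < Ig := lt_of_lt_of_le one_pos hIg1
  have hCle : C ≤ ε / 3 * Ig := by
    have h := (le_max_right (1 : ℝ) (C / (ε / 3))).trans hIg
    rw [div_le_iff₀ hε3] at h
    calc C ≤ Ig * (ε / 3) := h
      _ = ε / 3 * Ig := mul_comm _ _
  have key : |If - L * Ig| ≤ C + ε / 3 * Ig := by
    have heq : If - L * Ig = (A - L * B)
        + ((∫ y in Set.Ioc x₀ x, f y ∂μ) - L * ∫ y in Set.Ioc x₀ x, g y ∂μ) := by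
      rw [hsplitf, hsplitg]; ring
    rw [heq]
    calc |(A - L * B) + _| ≤ |A - L * B| + |(∫ y in Set.Ioc x₀ x, f y ∂μ)
          - L * ∫ y in Set.Ioc x₀ x, g y ∂μ| := abs_add_le _ _
      _ ≤ C + ε / 3 * ∫ y in Set.Ioc x₀ x, g y ∂μ := add_le_add_right hest _
      _ ≤ C + ε / 3 * Ig := by
          have : (∫ y in Set.Ioc x₀ x, g y ∂μ) ≤ Ig := by rw [hsplitg]; linarith
          nlinarith
  rw [Real.dist_eq]
  have hdiv : If / Ig - L = (If - L * Ig) / Ig := by field_simp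
  rw [hdiv, abs_div, abs_of_pos hIg0, div_lt_iff₀ hIg0]
  nlinarith [mul_pos hε3 hIg0]

/-- If `f/g → L ∈ [0, ∞)` at `b⁻`, `∫_{(x₁,x]} g dμ → ∞`, and
`F(x) = c_f + r ∫_{(x₁,x]} f dμ`, `G(x) = c_g + s ∫_{(x₁,x]} g dμ` with `G > 0`
eventually and `F/G → L` at `b⁻` as well, then `L = (r/s) L`; hence `L = 0` when `r ≠ s`. -/
theorem scaled_antiderivative_ratio_limit
    (x₁ : ℝ) (b : EReal) (hb : (x₁ : EReal) < b)
    (μ : Measure ℝ) (f g F G : ℝ → ℝ)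
    (r s c_f c_g : ℝ) (hr : 0 < r) (hs : 0 < s)
    (hf_meas : Measurable f) (hg_meas : Measurable g)
    (hf_pos : ∀ x : ℝ, x₁ < x → (x : EReal) < b → 0 < f x)
    (hg_pos : ∀ x : ℝ, x₁ < x → (x : EReal) < b → 0 < g x)
    (hf_int : ∀ x : ℝ, x₁ < x → (x : EReal) < b → IntegrableOn f (Set.Ioc x₁ x) μ)
    (hg_int : ∀ x : ℝ, x₁ < x → (x : EReal) < b → IntegrableOn g (Set.Ioc x₁ x) μ)
    (hg_top : Tendsto (fun x => ∫ y in Set.Ioc x₁ x, g y ∂μ) (leftLimFilter b) atTop)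
    (L : ℝ) (hL0 : 0 ≤ L)
    (hL : Tendsto (fun x => f x / g x) (leftLimFilter b) (nhds L))
    (hF : ∀ x : ℝ, x₁ < x → (x : EReal) < b → F x = c_f + r * ∫ y in Set.Ioc x₁ x, f y ∂μ)
    (hG : ∀ x : ℝ, x₁ < x → (x : EReal) < b → G x = c_g + s * ∫ y in Set.Ioc x₁ x, g y ∂μ)
    (hG_pos : ∀ᶠ x in leftLimFilter b, 0 < G x)
    (hFG : Tendsto (fun x => F x / G x) (leftLimFilter b) (nhds L)) :
    L = (r / s) * L ∧ (r ≠ s → L = 0) := by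
  have hNeBot : (leftLimFilter b).NeBot := llf_neBot hb
  have hIfg := cesaro_integral hb μ f g hg_pos hf_int hg_int hg_top L hL
  set Ig : ℝ → ℝ := fun x => ∫ y in Set.Ioc x₁ x, g y ∂μ with hIgdef
  set If : ℝ → ℝ := fun x => ∫ y in Set.Ioc x₁ x, f y ∂μ with hIfdef
  have hzf : Tendsto (fun x => c_f / Ig x) (leftLimFilter b) (nhds 0) :=
    tendsto_const_nhds.div_atTop hg_top
  have hzg : Tendsto (fun x => c_g / Ig x) (leftLimFilter b) (nhds 0) :=
    tendsto_const_nhds.div_atTop hg_top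
  have hnum : Tendsto (fun x => c_f / Ig x + r * (If x / Ig x)) (leftLimFilter b)
      (nhds (0 + r * L)) := hzf.add (hIfg.const_mul r)
  have hden : Tendsto (fun x => c_g / Ig x + s) (leftLimFilter b) (nhds (0 + s)) :=
    hzg.add tendsto_const_nhds
  have hs0 : (0 : ℝ) + s ≠ 0 := by linarith
  have hratio := hnum.div hden hs0
  have hev : ∀ᶠ x in leftLimFilter b,
      (c_f / Ig x + r * (If x / Ig x)) / (c_g / Ig x + s) = F x / G x := by
    have hbasic : ∀ᶠ x in leftLimFilter b, x₁ < x ∧ (x : EReal) < b :=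
      llf_ev x₁ hb fun x h1 h2 => ⟨h1, h2⟩
    filter_upwards [hbasic, hg_top.eventually_ge_atTop 1] with x hx hIg1
    obtain ⟨h1, h2⟩ := hx
    have hIgne : Ig x ≠ 0 := by
      have : (0 : ℝ) < Ig x := lt_of_lt_of_le one_pos hIg1
      exact this.ne'
    rw [hF x h1 h2, hG x h1 h2]
    rw [show c_f + r * If x = (c_f + r * If x) from rfl]
    have e1 : c_f / Ig x + r * (If x / Ig x) = (c_f + r * If x) / Ig x := by
      field_simp
    have e2 : c_g / Ig x + s = (c_g + s * Ig x) / Ig x := by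
      field_simp
    rw [e1, e2, div_div_div_cancel_right₀ hIgne]
  have h2 : Tendsto (fun x => F x / G x) (leftLimFilter b) (nhds ((0 + r * L) / (0 + s))) :=
    hratio.congr' hev
  have heq : L = (0 + r * L) / (0 + s) := tendsto_nhds_unique hFG h2
  have heq'' : L = r * L / s := by simpa using heq
  have heq' : L = r / s * L := by rw [div_mul_eq_mul_div]; exact heq''
  refine ⟨heq', fun hrs => ?_⟩
  have hsL : s * L = r * L := by
    have h3 := heq'
    field_simp at h3
    linarith [h3]
  have h4 : (s - r) * L = 0 := by ring_nf; linarith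
  rcases mul_eq_zero.1 h4 with h | h
  · exact absurd (by linarith : r = s) hrs
  · exact h
end

section
/- Stolz–Cesàro for integrals: let μ be a measure on an interval (x₁, b), f, g : (x₁, b) → (0, ∞) measurable and locally μ-integrable, with ∫_{(x₁,x]} g dμ → ∞ as x → b⁻. If lim_{x→b⁻} f(x)/g(x) = L ∈ [0, ∞), then lim_{x→b⁻} (∫_{(x₁,x]} f dμ) / (∫_{(x₁,x]} g dμ) = L. -/
open Filter Set Topology MeasureTheory
open scoped ENNReal

lemma leftLim_eventually_of_lt {x₁ : ℝ} {b : EReal} (hb : (x₁ : EReal) < b) :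
    ∀ᶠ x : ℝ in leftLimFilter b, x₁ < x ∧ (x : EReal) < b := by
  have h1 : Set.Ioi ((x₁ : ℝ) : EReal) ∩ Set.Iio b ∈ nhdsWithin b (Set.Iio b) :=
    Filter.inter_mem (mem_nhdsWithin_of_mem_nhds (isOpen_Ioi.mem_nhds hb)) self_mem_nhdsWithin
  have h2 : (fun x : ℝ => (x : EReal)) ⁻¹' (Set.Ioi ((x₁ : ℝ) : EReal) ∩ Set.Iio b)
      ∈ leftLimFilter b := by
    rw [leftLimFilter]; exact Filter.preimage_mem_comap h1
  filter_upwards [h2] with x hx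
  refine ⟨?_, hx.2⟩
  have := hx.1
  simp only [Set.mem_Ioi] at this
  exact_mod_cast this

lemma leftLim_threshold {x₁ : ℝ} {b : EReal} (hb : (x₁ : EReal) < b) {P : ℝ → Prop}
    (h : ∀ᶠ x : ℝ in leftLimFilter b, P x) :
    ∃ x₀ : ℝ, x₁ < x₀ ∧ (x₀ : EReal) < b ∧ ∀ x : ℝ, x₀ < x → (x : EReal) < b → P x := by
  obtain ⟨t, ht, hsub⟩ := Filter.mem_comap.mp h
  have hbot : (⊥ : EReal) < b := lt_of_le_of_lt bot_le hb
  obtain ⟨l, hl, hIoo⟩ := (mem_nhdsLT_iff_exists_Ioo_subset' hbot).mp ht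
  have hmax : max l ((x₁ : ℝ) : EReal) < b := max_lt hl hb
  obtain ⟨z, hz1, hz2⟩ := exists_between hmax
  have hzbot : (⊥ : EReal) < z := lt_of_le_of_lt (le_trans bot_le (le_max_right _ _)) hz1
  have hztop : z < ⊤ := lt_of_lt_of_le hz2 le_top
  lift z to ℝ using ⟨hztop.ne, hzbot.ne'⟩
  refine ⟨z, ?_, hz2, fun x hzx hxb => ?_⟩
  · exact_mod_cast lt_of_le_of_lt (le_max_right _ _) hz1
  · apply hsub
    apply hIoo
    constructor
    · calc l ≤ max l ((x₁ : ℝ) : EReal) := le_max_left _ _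
        _ < (z : EReal) := hz1
        _ < (x : EReal) := by exact_mod_cast hzx
    · exact hxb

/-- Stolz–Cesàro for integrals: if `f, g : (x₁, b) → (0, ∞)` are measurable and locally
`μ`-integrable, `∫_{(x₁,x]} g dμ → ∞` as `x → b⁻`, and `f/g → L ∈ [0, ∞)` at `b⁻`, then
`(∫_{(x₁,x]} f dμ) / (∫_{(x₁,x]} g dμ) → L` at `b⁻`. -/
theorem stolz_cesaro_integrals
    (x₁ : ℝ) (b : EReal) (hb : (x₁ : EReal) < b)
    (μ : Measure ℝ) (f g : ℝ → ℝ)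
    (hf_meas : Measurable f) (hg_meas : Measurable g)
    (hf_pos : ∀ x : ℝ, x₁ < x → (x : EReal) < b → 0 < f x)
    (hg_pos : ∀ x : ℝ, x₁ < x → (x : EReal) < b → 0 < g x)
    (hf_int : ∀ x : ℝ, x₁ < x → (x : EReal) < b → IntegrableOn f (Set.Ioc x₁ x) μ)
    (hg_int : ∀ x : ℝ, x₁ < x → (x : EReal) < b → IntegrableOn g (Set.Ioc x₁ x) μ)
    (hg_top : Tendsto (fun x => ∫ y in Set.Ioc x₁ x, g y ∂μ) (leftLimFilter b) atTop)
    (L : ℝ) (hL0 : 0 ≤ L)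
    (hL : Tendsto (fun x => f x / g x) (leftLimFilter b) (nhds L)) :
    Tendsto (fun x => (∫ y in Set.Ioc x₁ x, f y ∂μ) / (∫ y in Set.Ioc x₁ x, g y ∂μ))
      (leftLimFilter b) (nhds L) := by
  set F := fun x => ∫ y in Set.Ioc x₁ x, f y ∂μ with hF
  set G := fun x => ∫ y in Set.Ioc x₁ x, g y ∂μ with hG
  rw [Metric.tendsto_nhds]
  intro ε hε
  have hε4 : (0:ℝ) < ε / 4 := by positivity
  have hev : ∀ᶠ x : ℝ in leftLimFilter b,
      (x₁ < x ∧ (x : EReal) < b) ∧ |f x / g x - L| < ε / 4 := by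
    refine (leftLim_eventually_of_lt hb).and ?_
    have := Metric.tendsto_nhds.mp hL (ε / 4) hε4
    simpa [Real.dist_eq] using this
  obtain ⟨x₀, hx₀1, hx₀b, hx₀⟩ := leftLim_threshold hb hev
  set C := |F x₀ - L * G x₀| with hC
  have hC0 : 0 ≤ C := abs_nonneg _
  have hevG : ∀ᶠ x : ℝ in leftLimFilter b, max 1 (4 * C / ε) ≤ G x :=
    hg_top.eventually_ge_atTop _
  filter_upwards [hevG, leftLim_eventually_of_lt hb, leftLim_eventually_of_lt hx₀b]
    with x hGx hx hx₀x
  obtain ⟨hx1, hxb⟩ := hx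
  obtain ⟨hx0lt, _⟩ := hx₀x
  have hx0le : x₀ ≤ x := le_of_lt hx0lt
  have hGpos : 0 < G x := lt_of_lt_of_le (by norm_num) (le_trans (le_max_left _ _) hGx)
  -- integrability on the pieces
  have hfx : IntegrableOn f (Set.Ioc x₁ x) μ := hf_int x hx1 hxb
  have hgx : IntegrableOn g (Set.Ioc x₁ x) μ := hg_int x hx1 hxb
  have hf0 : IntegrableOn f (Set.Ioc x₁ x₀) μ := hf_int x₀ hx₀1 hx₀b
  have hg0 : IntegrableOn g (Set.Ioc x₁ x₀) μ := hg_int x₀ hx₀1 hx₀b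
  have hfI : IntegrableOn f (Set.Ioc x₀ x) μ :=
    hfx.mono_set (Set.Ioc_subset_Ioc (le_of_lt hx₀1) le_rfl)
  have hgI : IntegrableOn g (Set.Ioc x₀ x) μ :=
    hgx.mono_set (Set.Ioc_subset_Ioc (le_of_lt hx₀1) le_rfl)
  have hdisj : Disjoint (Set.Ioc x₁ x₀) (Set.Ioc x₀ x) :=
    (Set.Iic_disjoint_Ioi le_rfl).mono Set.Ioc_subset_Iic_self Set.Ioc_subset_Ioi_self
  have hunion : Set.Ioc x₁ x₀ ∪ Set.Ioc x₀ x = Set.Ioc x₁ x :=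
    Set.Ioc_union_Ioc_eq_Ioc (le_of_lt hx₀1) hx0le
  have hFsplit : F x = F x₀ + ∫ y in Set.Ioc x₀ x, f y ∂μ := by
    rw [hF]
    simp only
    rw [← hunion, MeasureTheory.setIntegral_union hdisj measurableSet_Ioc hf0 hfI]
  have hGsplit : G x = G x₀ + ∫ y in Set.Ioc x₀ x, g y ∂μ := by
    rw [hG]
    simp only
    rw [← hunion, MeasureTheory.setIntegral_union hdisj measurableSet_Ioc hg0 hgI]
  -- pointwise estimate on Ioc x₀ x
  have hpt : ∀ y ∈ Set.Ioc x₀ x, |f y - L * g y| ≤ ε / 4 * g y := by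
    intro y hy
    have hyb : (y : EReal) < b :=
      lt_of_le_of_lt (by exact_mod_cast hy.2 : (y : EReal) ≤ (x : EReal)) hxb
    have hy1 : x₁ < y := lt_trans hx₀1 hy.1
    have hgy : 0 < g y := hg_pos y hy1 hyb
    have hq := (hx₀ y hy.1 hyb).2
    have heq : f y - L * g y = (f y / g y - L) * g y := by
      field_simp
    rw [heq, abs_mul, abs_of_pos hgy]
    exact mul_le_mul_of_nonneg_right (le_of_lt hq) (le_of_lt hgy)
  have habs : |∫ y in Set.Ioc x₀ x, f y ∂μ - L * ∫ y in Set.Ioc x₀ x, g y ∂μ|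
      ≤ ε / 4 * ∫ y in Set.Ioc x₀ x, g y ∂μ := by
    have h1 : (∫ y in Set.Ioc x₀ x, f y ∂μ) - L * ∫ y in Set.Ioc x₀ x, g y ∂μ
        = ∫ y in Set.Ioc x₀ x, (f y - L * g y) ∂μ := by
      rw [MeasureTheory.integral_sub hfI (hgI.const_mul L),
        MeasureTheory.integral_const_mul]
    rw [h1]
    calc |∫ y in Set.Ioc x₀ x, (f y - L * g y) ∂μ|
        ≤ ∫ y in Set.Ioc x₀ x, |f y - L * g y| ∂μ := by
          simpa using norm_integral_le_integral_norm (μ := μ.restrict (Set.Ioc x₀ x))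
            (f := fun y => f y - L * g y)
      _ ≤ ∫ y in Set.Ioc x₀ x, ε / 4 * g y ∂μ :=
          MeasureTheory.setIntegral_mono_on (hfI.sub (hgI.const_mul L)).abs
            (hgI.const_mul (ε / 4)) measurableSet_Ioc hpt
      _ = ε / 4 * ∫ y in Set.Ioc x₀ x, g y ∂μ := MeasureTheory.integral_const_mul _ _
  -- ∫ g over small interval ≤ G x, and is nonneg
  have hg_nonneg_ae : 0 ≤ᵐ[μ.restrict (Set.Ioc x₁ x)] g := by
    filter_upwards [MeasureTheory.ae_restrict_mem measurableSet_Ioc] with y hy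
    have hyb : (y : EReal) < b :=
      lt_of_le_of_lt (by exact_mod_cast hy.2 : (y : EReal) ≤ (x : EReal)) hxb
    exact le_of_lt (hg_pos y hy.1 hyb)
  have hgle : ∫ y in Set.Ioc x₀ x, g y ∂μ ≤ G x :=
    MeasureTheory.setIntegral_mono_set hgx hg_nonneg_ae
      (HasSubset.Subset.eventuallyLE (Set.Ioc_subset_Ioc (le_of_lt hx₀1) le_rfl))
  have hgsmall_nonneg : 0 ≤ ∫ y in Set.Ioc x₀ x, g y ∂μ := by
    refine MeasureTheory.integral_nonneg_of_ae ?_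
    filter_upwards [MeasureTheory.ae_restrict_mem measurableSet_Ioc] with y hy
    have hyb : (y : EReal) < b :=
      lt_of_le_of_lt (by exact_mod_cast hy.2 : (y : EReal) ≤ (x : EReal)) hxb
    exact le_of_lt (hg_pos y (lt_trans hx₀1 hy.1) hyb)
  -- the key bound
  have hkey : |F x - L * G x| ≤ C + ε / 4 * G x := by
    have : F x - L * G x = (F x₀ - L * G x₀)
        + ((∫ y in Set.Ioc x₀ x, f y ∂μ) - L * ∫ y in Set.Ioc x₀ x, g y ∂μ) := by
      rw [hFsplit, hGsplit]; ring
    rw [this]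
    calc |(F x₀ - L * G x₀) + ((∫ y in Set.Ioc x₀ x, f y ∂μ)
          - L * ∫ y in Set.Ioc x₀ x, g y ∂μ)|
        ≤ C + |(∫ y in Set.Ioc x₀ x, f y ∂μ) - L * ∫ y in Set.Ioc x₀ x, g y ∂μ| :=
          abs_add_le _ _
      _ ≤ C + ε / 4 * ∫ y in Set.Ioc x₀ x, g y ∂μ := by linarith [habs]
      _ ≤ C + ε / 4 * G x := by nlinarith [hgle]
  -- conclude
  rw [Real.dist_eq]
  have hdiv : F x / G x - L = (F x - L * G x) / G x := by
    field_simp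
  rw [hdiv, abs_div, abs_of_pos hGpos]
  have hCdiv : C / G x ≤ ε / 4 := by
    rw [div_le_iff₀ hGpos]
    have h4 : 4 * C / ε ≤ G x := le_trans (le_max_right _ _) hGx
    rw [div_le_iff₀ hε] at h4
    nlinarith
  calc |F x - L * G x| / G x ≤ (C + ε / 4 * G x) / G x := by gcongr
    _ = C / G x + ε / 4 := by
        rw [add_div, mul_div_assoc, div_self hGpos.ne', mul_one]
    _ ≤ ε / 4 + ε / 4 := by linarith [hCdiv]
    _ < ε := by linarith
end

section
/- Let f : (α, β) → (0, ∞) be increasing and convex-with-respect-to p in the sense that its right derivative with respect to an increasing continuous function p exists everywhere and satisfies (d⁺f/dp)(x₂) − (d⁺f/dp)(x₁) = r ∫_{(x₁, x₂]} f dm for all α < x₁ < x₂ < β, where r > 0 and m is a Radon measure on (α, β) with full support. Then d⁺f/dp is increasing, and lim_{x→β⁻} (d⁺f/dp)(x) exists in (−∞, ∞]. Moreover this limit is finite if and only if ∫_{(x₁, β)} f dm < ∞ for some (equivalently all) x₁ ∈ (α, β). -/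
open Filter Set Topology MeasureTheory
open scoped ENNReal

theorem llf_mem (β : EReal) (c : ℝ) (h : (c : EReal) < β) :
    {x : ℝ | c < x ∧ (x : EReal) < β} ∈ leftLimFilter β := by
  have : ((fun x : ℝ => (x : EReal)) ⁻¹' Set.Ioo (c : EReal) β)
      = {x : ℝ | c < x ∧ (x : EReal) < β} := by
    ext y; simp [EReal.coe_lt_coe_iff]
  rw [← this]
  exact Filter.preimage_mem_comap (Ioo_mem_nhdsLT h)

theorem llf_neBot_s10 (α β : EReal) (hαβ : α < β) : (leftLimFilter β).NeBot := by
  refine Filter.comap_neBot (fun t ht => ?_)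
  obtain ⟨U, hU, hβU, hsub⟩ := mem_nhdsWithin.1 ht
  obtain ⟨l, hl, hIoc⟩ := exists_Ioc_subset_of_mem_nhds (hU.mem_nhds hβU) ⟨α, hαβ⟩
  obtain ⟨y, hly, hyβ⟩ := EReal.exists_between_coe_real hl
  exact ⟨y, hsub ⟨hIoc ⟨hly, hyβ.le⟩, hyβ⟩⟩

theorem llf_coe (b : ℝ) : leftLimFilter (b : EReal) = 𝓝[<] b := by
  unfold leftLimFilter
  rw [nhdsWithin, Filter.comap_inf, Filter.comap_principal, EReal.nhds_coe,
    Filter.comap_map (fun x y => by exact_mod_cast id)]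
  congr 1
  ext y; simp [EReal.coe_lt_coe_iff]

theorem llf_top_le : leftLimFilter ⊤ ≤ atTop := by
  intro s hs
  obtain ⟨c, hc⟩ := mem_atTop_sets.1 hs
  filter_upwards [llf_mem ⊤ c (EReal.coe_lt_top c)] with y hy
  exact hc y hy.1.le

theorem seq_cover (β : EReal) (c : ℝ) (h : (c : EReal) < β) :
    ∃ u : ℕ → ℝ, Monotone u ∧ (∀ n, c < u n ∧ ((u n : ℝ) : EReal) < β) ∧
      {y : ℝ | c < y ∧ (y : EReal) < β} ⊆ ⋃ n, Set.Ioc c (u n) := by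
  induction β with
  | bot => simp at h
  | coe b =>
    have hcb : c < b := by exact_mod_cast h
    have hbc : (0:ℝ) < b - c := by linarith
    refine ⟨fun n => b - (b - c)/(n + 2), ?_, ?_, ?_⟩
    · intro n k hnk
      have h2 : ((n:ℝ) + 2) ≤ (k:ℝ) + 2 := by exact_mod_cast by omega
      have hn2 : (0:ℝ) < (n:ℝ) + 2 := by positivity
      simp only
      gcongr
    · intro n
      have hn2 : (1:ℝ) < (n:ℝ) + 2 := by
        have : (0:ℝ) ≤ (n:ℝ) := Nat.cast_nonneg n
        linarith
      have hlt : (b - c)/((n:ℝ) + 2) < b - c := div_lt_self hbc hn2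
      have hpos : (0:ℝ) < (b - c)/((n:ℝ) + 2) := by positivity
      constructor
      · simp only; linarith
      · have : b - (b - c)/((n:ℝ) + 2) < b := by linarith
        exact_mod_cast this
    · rintro y ⟨hcy, hyb'⟩
      have hyb : y < b := by exact_mod_cast hyb'
      have hby : (0:ℝ) < b - y := by linarith
      obtain ⟨n, hn⟩ := exists_nat_ge ((b - c)/(b - y))
      refine mem_iUnion.2 ⟨n, hcy, ?_⟩
      rw [div_le_iff₀ hby] at hn
      have hstep : (b - c)/((n:ℝ) + 2) ≤ b - y := by
        rw [div_le_iff₀ (by positivity : (0:ℝ) < (n:ℝ) + 2)]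
        nlinarith
      simp only; linarith
  | top =>
    refine ⟨fun n => c + 1 + n, ?_, ?_, ?_⟩
    · intro n k hnk
      have : (n:ℝ) ≤ (k:ℝ) := by exact_mod_cast hnk
      simp only; linarith
    · intro n
      constructor
      · have : (0:ℝ) ≤ (n:ℝ) := Nat.cast_nonneg n
        simp only; linarith
      · exact EReal.coe_lt_top _
    · rintro y ⟨hcy, _⟩
      obtain ⟨n, hn⟩ := exists_nat_ge (y - c - 1)
      exact mem_iUnion.2 ⟨n, hcy, by simp only; linarith⟩

/-- If `f : (α, β) → (0, ∞)` is increasing, has a right derivative `D = d⁺f/dp` with respect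
to a continuous strictly increasing `p`, and
`D(x₂) − D(x₁) = r ∫_{(x₁,x₂]} f dm` for a Radon measure `m` of full support and `r > 0`,
then `D` is increasing, `lim_{x→β⁻} D(x)` exists in `(−∞, ∞]`, and this limit is finite
if and only if `∫_{(x₁,β)} f dm < ∞` for some (equivalently, all) `x₁ ∈ (α, β)`. -/
theorem right_derivative_monotone_limit_iff_integrable
    (α β : EReal) (hαβ : α < β)
    (f D p : ℝ → ℝ) (m : Measure ℝ) (r : ℝ) (hr : 0 < r)
    (hf_pos : ∀ x : ℝ, α < (x : EReal) → (x : EReal) < β → 0 < f x)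
    (hf_mono : MonotoneOn f {x : ℝ | α < (x : EReal) ∧ (x : EReal) < β})
    (hp_mono : StrictMonoOn p {x : ℝ | α < (x : EReal) ∧ (x : EReal) < β})
    (hp_cont : ContinuousOn p {x : ℝ | α < (x : EReal) ∧ (x : EReal) < β})
    (hD : ∀ x : ℝ, α < (x : EReal) → (x : EReal) < β →
      Tendsto (fun ε => (f (x + ε) - f x) / (p (x + ε) - p x))
        (nhdsWithin 0 (Set.Ioi 0)) (nhds (D x)))
    (hODE : ∀ x₁ x₂ : ℝ, α < (x₁ : EReal) → (x₂ : EReal) < β → x₁ < x₂ →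
      D x₂ - D x₁ = r * ∫ y in Set.Ioc x₁ x₂, f y ∂m)
    (hRadon : ∀ x₁ x₂ : ℝ, α < (x₁ : EReal) → (x₂ : EReal) < β → x₁ ≤ x₂ →
      m (Set.Icc x₁ x₂) < ⊤)
    (hsupp : ∀ x₁ x₂ : ℝ, α < (x₁ : EReal) → (x₂ : EReal) < β → x₁ < x₂ →
      0 < m (Set.Ioo x₁ x₂)) :
    MonotoneOn D {x : ℝ | α < (x : EReal) ∧ (x : EReal) < β} ∧
    ∃ Λ : EReal, ⊥ < Λ ∧
      Tendsto (fun x => (D x : EReal)) (leftLimFilter β) (nhds Λ) ∧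
      ((Λ < ⊤) ↔ ∃ x₁ : ℝ, α < (x₁ : EReal) ∧ (x₁ : EReal) < β ∧
        (∫⁻ y in {y : ℝ | x₁ < y ∧ (y : EReal) < β}, ENNReal.ofReal (f y) ∂m) < ⊤) ∧
      ((Λ < ⊤) ↔ ∀ x₁ : ℝ, α < (x₁ : EReal) → (x₁ : EReal) < β →
        (∫⁻ y in {y : ℝ | x₁ < y ∧ (y : EReal) < β}, ENNReal.ofReal (f y) ∂m) < ⊤) := by
  obtain ⟨a, haα, haβ⟩ := EReal.exists_between_coe_real hαβ
  -- monotonicity of D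
  have hmonoD : MonotoneOn D {x : ℝ | α < (x : EReal) ∧ (x : EReal) < β} := by
    rintro x ⟨hx1, hx2⟩ y ⟨hy1, hy2⟩ hxy
    rcases eq_or_lt_of_le hxy with rfl | h
    · exact le_refl _
    · have hode := hODE x y hx1 hy2 h
      have hint : 0 ≤ ∫ z in Set.Ioc x y, f z ∂m := by
        refine setIntegral_nonneg measurableSet_Ioc (fun z hz => ?_)
        exact (hf_pos z (hx1.trans (by exact_mod_cast hz.1))
          (lt_of_le_of_lt (by exact_mod_cast hz.2) hy2)).le
      nlinarith
  set μ : Measure ℝ := m.withDensity (fun y => ENNReal.ofReal (f y)) with hμ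
  -- finiteness of μ on compact subintervals
  have hμIoc : ∀ x₁ x₂ : ℝ, α < (x₁ : EReal) → (x₂ : EReal) < β → x₁ ≤ x₂ →
      μ (Set.Ioc x₁ x₂) < ⊤ := by
    intro x₁ x₂ h1 h2 h12
    rw [hμ, withDensity_apply _ measurableSet_Ioc]
    have hx₂mem : α < ((x₂:ℝ) : EReal) ∧ ((x₂:ℝ) : EReal) < β :=
      ⟨h1.trans_le (by exact_mod_cast h12), h2⟩
    calc ∫⁻ y in Set.Ioc x₁ x₂, ENNReal.ofReal (f y) ∂m
        ≤ ∫⁻ _ in Set.Ioc x₁ x₂, ENNReal.ofReal (f x₂) ∂m := by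
          refine setLIntegral_mono' measurableSet_Ioc (fun y hy => ?_)
          refine ENNReal.ofReal_le_ofReal (hf_mono ?_ hx₂mem hy.2)
          exact ⟨h1.trans (by exact_mod_cast hy.1),
            lt_of_le_of_lt (by exact_mod_cast hy.2) h2⟩
      _ = ENNReal.ofReal (f x₂) * m (Set.Ioc x₁ x₂) := by
          rw [setLIntegral_const]
      _ < ⊤ := ENNReal.mul_lt_top ENNReal.ofReal_lt_top
          (lt_of_le_of_lt (measure_mono Set.Ioc_subset_Icc_self) (hRadon x₁ x₂ h1 h2 h12))
  -- the ODE in terms of μ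
  have hDeq : ∀ x₁ x₂ : ℝ, α < (x₁ : EReal) → (x₂ : EReal) < β → x₁ < x₂ →
      D x₂ = D x₁ + r * (μ (Set.Ioc x₁ x₂)).toReal := by
    intro x₁ x₂ h1 h2 h12
    have hsub : Set.Ioc x₁ x₂ ⊆ {x : ℝ | α < (x : EReal) ∧ (x : EReal) < β} := by
      intro z hz
      exact ⟨h1.trans (by exact_mod_cast hz.1), lt_of_le_of_lt (by exact_mod_cast hz.2) h2⟩
    have hae : AEStronglyMeasurable f (m.restrict (Set.Ioc x₁ x₂)) :=
      (aemeasurable_restrict_of_monotoneOn measurableSet_Ioc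
        (hf_mono.mono hsub)).aestronglyMeasurable
    have hnn : 0 ≤ᵐ[m.restrict (Set.Ioc x₁ x₂)] f :=
      (ae_restrict_iff' measurableSet_Ioc).2
        (ae_of_all _ (fun y hy => (hf_pos y (hsub hy).1 (hsub hy).2).le))
    have heq := integral_eq_lintegral_of_nonneg_ae hnn hae
    have hode := hODE x₁ x₂ h1 h2 h12
    rw [heq] at hode
    rw [hμ, withDensity_apply _ measurableSet_Ioc]
    linarith
  -- existence of the limit
  have hexists : ∃ Λ : EReal, Tendsto (fun x => (D x : EReal)) (leftLimFilter β) (𝓝 Λ) := by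
    clear hμIoc hDeq hODE hRadon hsupp hD hf_pos hf_mono hp_mono hp_cont
    induction β with
    | bot => exact absurd hαβ (by simp)
    | coe b =>
      have hab : a < b := by exact_mod_cast haβ
      have hgm : MonotoneOn (fun x : ℝ => (D (a ⊔ x) : EReal)) (Set.Iio b) := by
        intro x hx y hy hxy
        have h1 : α < ((a ⊔ x : ℝ) : EReal) ∧ ((a ⊔ x : ℝ) : EReal) < (b : EReal) :=
          ⟨lt_of_lt_of_le haα (by exact_mod_cast le_sup_left),
            by exact_mod_cast sup_lt_iff.2 ⟨hab, hx⟩⟩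
        have h2 : α < ((a ⊔ y : ℝ) : EReal) ∧ ((a ⊔ y : ℝ) : EReal) < (b : EReal) :=
          ⟨lt_of_lt_of_le haα (by exact_mod_cast le_sup_left),
            by exact_mod_cast sup_lt_iff.2 ⟨hab, hy⟩⟩
        exact EReal.coe_le_coe_iff.2 (hmonoD h1 h2 (sup_le_sup_left hxy a))
      have ht := hgm.tendsto_nhdsLT (OrderTop.bddAbove _)
      rw [llf_coe b]
      refine ⟨_, ht.congr' ?_⟩
      filter_upwards [Ioo_mem_nhdsLT hab] with y hy
      simp [sup_eq_right.2 hy.1.le]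
    | top =>
      have hgm : Monotone (fun x : ℝ => (D (a ⊔ x) : EReal)) := by
        intro x y hxy
        have h1 : α < ((a ⊔ x : ℝ) : EReal) ∧ ((a ⊔ x : ℝ) : EReal) < ⊤ :=
          ⟨lt_of_lt_of_le haα (by exact_mod_cast le_sup_left), EReal.coe_lt_top _⟩
        have h2 : α < ((a ⊔ y : ℝ) : EReal) ∧ ((a ⊔ y : ℝ) : EReal) < ⊤ :=
          ⟨lt_of_lt_of_le haα (by exact_mod_cast le_sup_left), EReal.coe_lt_top _⟩
        exact EReal.coe_le_coe_iff.2 (hmonoD h1 h2 (sup_le_sup_left hxy a))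
      have ht := tendsto_atTop_iSup hgm
      refine ⟨_, ((ht.mono_left llf_top_le)).congr' ?_⟩
      filter_upwards [llf_mem ⊤ a (EReal.coe_lt_top a)] with y hy
      simp [sup_eq_right.2 hy.1.le]
  obtain ⟨Λ, hΛ⟩ := hexists
  haveI : (leftLimFilter β).NeBot := llf_neBot_s10 α β hαβ
  -- Λ dominates all values of D
  have hle : ∀ x : ℝ, α < (x : EReal) → (x : EReal) < β → (D x : EReal) ≤ Λ := by
    intro x hx1 hx2
    refine ge_of_tendsto hΛ ?_
    filter_upwards [llf_mem β x hx2] with y hy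
    exact EReal.coe_le_coe_iff.2
      (hmonoD ⟨hx1, hx2⟩ ⟨hx1.trans (by exact_mod_cast hy.1), hy.2⟩ hy.1.le)
  have hub : ∀ (c M : ℝ), (c : EReal) < β →
      (∀ y : ℝ, c < y → (y : EReal) < β → D y ≤ M) → Λ ≤ (M : EReal) := by
    intro c M hc2 hbd
    refine le_of_tendsto hΛ ?_
    filter_upwards [llf_mem β c hc2] with y hy
    exact EReal.coe_le_coe_iff.2 (hbd y hy.1 hy.2)
  have hΛbot : ⊥ < Λ := lt_of_lt_of_le (EReal.bot_lt_coe (D a)) (hle a haα haβ)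
  -- measurability of the tail sets
  have hTmeas : ∀ c : ℝ, MeasurableSet {y : ℝ | c < y ∧ (y : EReal) < β} := by
    intro c
    have : {y : ℝ | c < y ∧ (y : EReal) < β}
        = Set.Ioi c ∩ (fun y : ℝ => (y : EReal)) ⁻¹' (Set.Iio β) := rfl
    rw [this]
    exact measurableSet_Ioi.inter (measurable_coe_real_ereal measurableSet_Iio)
  have hTeq : ∀ c : ℝ, (∫⁻ y in {y : ℝ | c < y ∧ (y : EReal) < β}, ENNReal.ofReal (f y) ∂m)
      = μ {y : ℝ | c < y ∧ (y : EReal) < β} := by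
    intro c
    rw [hμ, withDensity_apply _ (hTmeas c)]
  -- forward direction : finite limit implies finite tail integral, for every base point
  have hfwd : ∀ c : ℝ, α < (c : EReal) → (c : EReal) < β → Λ < ⊤ →
      μ {y : ℝ | c < y ∧ (y : EReal) < β} < ⊤ := by
    intro c hc1 hc2 hΛtop
    obtain ⟨u, humono, hu, hcover⟩ := seq_cover β c hc2
    set L := Λ.toReal with hL
    have hΛL : (L : EReal) = Λ := EReal.coe_toReal hΛtop.ne hΛbot.ne'
    have hbound : ∀ n, μ (Set.Ioc c (u n)) ≤ ENNReal.ofReal ((L - D c)/r) := by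
      intro n
      have h1 := hDeq c (u n) hc1 (hu n).2 (hu n).1
      have h2 : D (u n) ≤ L := by
        have := hle (u n) (hc1.trans (by exact_mod_cast (hu n).1)) (hu n).2
        rw [← hΛL] at this
        exact_mod_cast this
      have h3 : (μ (Set.Ioc c (u n))).toReal ≤ (L - D c)/r := by
        rw [le_div_iff₀ hr]
        nlinarith
      calc μ (Set.Ioc c (u n))
          = ENNReal.ofReal (μ (Set.Ioc c (u n))).toReal :=
            (ENNReal.ofReal_toReal (hμIoc c (u n) hc1 (hu n).2 (hu n).1.le).ne).symm
        _ ≤ ENNReal.ofReal ((L - D c)/r) := ENNReal.ofReal_le_ofReal h3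
    have hdir : Directed (· ⊆ ·) (fun n => Set.Ioc c (u n)) := by
      intro i j
      exact ⟨max i j, Set.Ioc_subset_Ioc_right (humono (le_max_left i j)),
        Set.Ioc_subset_Ioc_right (humono (le_max_right i j))⟩
    calc μ {y : ℝ | c < y ∧ (y : EReal) < β} ≤ μ (⋃ n, Set.Ioc c (u n)) := measure_mono hcover
      _ = ⨆ n, μ (Set.Ioc c (u n)) := hdir.measure_iUnion
      _ ≤ ENNReal.ofReal ((L - D c)/r) := iSup_le hbound
      _ < ⊤ := ENNReal.ofReal_lt_top
  -- backward direction : finite tail integral at one base point implies finite limit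
  have hbwd : ∀ c : ℝ, α < (c : EReal) → (c : EReal) < β →
      μ {y : ℝ | c < y ∧ (y : EReal) < β} < ⊤ → Λ < ⊤ := by
    intro c hc1 hc2 hfin
    set M := D c + r * (μ {y : ℝ | c < y ∧ (y : EReal) < β}).toReal with hM
    have hΛM : Λ ≤ (M : EReal) := by
      refine hub c M hc2 (fun y hcy hyβ => ?_)
      rw [hDeq c y hc1 hyβ hcy]
      have hsub : Set.Ioc c y ⊆ {z : ℝ | c < z ∧ (z : EReal) < β} := by
        intro z hz
        exact ⟨hz.1, lt_of_le_of_lt (by exact_mod_cast hz.2) hyβ⟩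
      have := ENNReal.toReal_mono hfin.ne (measure_mono hsub)
      nlinarith
    exact lt_of_le_of_lt hΛM (EReal.coe_lt_top M)
  refine ⟨hmonoD, Λ, hΛbot, hΛ, ?_, ?_⟩
  · constructor
    · intro h
      exact ⟨a, haα, haβ, by rw [hTeq a]; exact hfwd a haα haβ h⟩
    · rintro ⟨x₁, h1, h2, h3⟩
      rw [hTeq x₁] at h3
      exact hbwd x₁ h1 h2 h3
  · constructor
    · intro h x₁ h1 h2
      rw [hTeq x₁]
      exact hfwd x₁ h1 h2 h
    · intro h
      have := h a haα haβ
      rw [hTeq a] at this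
      exact hbwd a haα haβ this
end

section
/- Let p : (α, β) → ℝ be continuous and strictly increasing, and suppose ψ_r(x) → ∞ and ψ_s(x) → ∞ as x → β⁻, where ψ_r, ψ_s : (α, β) → (0, ∞) both have right derivatives with respect to p with (d⁺ψ_s/dp)(x) > 0 eventually near β. If lim_{x→β⁻} (d⁺ψ_r/dp)(x)/(d⁺ψ_s/dp)(x) = L exists in [0, ∞], then lim_{x→β⁻} ψ_r(x)/ψ_s(x) = L. -/
open Filter Set Topology MeasureTheory
open scoped ENNReal

lemma mvt_aux (h p D : ℝ → ℝ) (x y : ℝ) (hxy : x < y)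
    (hc : ContinuousOn h (Set.Icc x y)) (hpc : ContinuousOn p (Set.Icc x y))
    (hpm : StrictMonoOn p (Set.Icc x y))
    (hd : ∀ t ∈ Set.Ico x y, Tendsto (fun ε => (h (t+ε) - h t)/(p (t+ε) - p t))
      (nhdsWithin 0 (Set.Ioi 0)) (nhds (D t)))
    (hD : ∀ t ∈ Set.Ico x y, 0 ≤ D t) : h x ≤ h y := by
  have hpxy : 0 < p y - p x :=
    sub_pos.2 (hpm ⟨le_refl x, hxy.le⟩ ⟨hxy.le, le_refl y⟩ hxy)
  have main : ∀ ε > 0, h x - h y ≤ ε * (p y - p x) := by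
    intro ε hε
    set S := Set.Icc x y ∩ (fun t => h x - h t - ε * (p t - p x)) ⁻¹' Set.Iic 0 with hS
    have hSc : IsClosed S := by
      apply ContinuousOn.preimage_isClosed_of_isClosed ?_ isClosed_Icc isClosed_Iic
      exact (continuousOn_const.sub hc).sub
        (continuousOn_const.mul (hpc.sub continuousOn_const))
    have hxS : x ∈ S := ⟨⟨le_refl x, hxy.le⟩, by simp⟩
    have hSne : S.Nonempty := ⟨x, hxS⟩
    have hSbdd : BddAbove S := ⟨y, fun t ht => ht.1.2⟩
    set c := sSup S with hcdef
    have hcS : c ∈ S := hSc.csSup_mem hSne hSbdd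
    have hcy : c ≤ y := csSup_le hSne fun t ht => ht.1.2
    have hxc : x ≤ c := le_csSup hSbdd hxS
    have hcicc : c ∈ Set.Icc x y := ⟨hxc, hcy⟩
    have hcey : c = y := by
      by_contra hne
      have hclt : c < y := lt_of_le_of_ne hcy hne
      have hcico : c ∈ Set.Ico x y := ⟨hxc, hclt⟩
      have hev : ∀ᶠ u in nhdsWithin 0 (Set.Ioi 0),
          -ε < (h (c+u) - h c)/(p (c+u) - p c) :=
        (hd c hcico).eventually (eventually_gt_nhds (by linarith [hD c hcico]))
      obtain ⟨δ0, hδ0, hsub⟩ := mem_nhdsGT_iff_exists_Ioo_subset.1 hev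
      have hδ0' : (0:ℝ) < δ0 := Set.mem_Ioi.1 hδ0
      set u := min (δ0/2) (y - c) with hu
      have hu0 : 0 < u := lt_min (by linarith) (by linarith)
      have huδ : u < δ0 := lt_of_le_of_lt (min_le_left _ _) (by linarith)
      have huy : c + u ≤ y := by
        have := min_le_right (δ0/2) (y - c); simp only [hu]; linarith
      have hzicc : c + u ∈ Set.Icc x y := ⟨by linarith, huy⟩
      have hslope : -ε < (h (c+u) - h c)/(p (c+u) - p c) := hsub ⟨hu0, huδ⟩
      have hpcz : 0 < p (c+u) - p c := sub_pos.2 (hpm hcicc hzicc (by linarith))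
      have h1 : -ε * (p (c+u) - p c) < h (c+u) - h c := by
        have := (lt_div_iff₀ hpcz).1 hslope
        linarith
      have hzS : c + u ∈ S := by
        refine ⟨hzicc, ?_⟩
        have h2 : h x - h c - ε * (p c - p x) ≤ 0 := hcS.2
        simp only [Set.mem_preimage, Set.mem_Iic]
        nlinarith
      have := le_csSup hSbdd hzS
      linarith
    have h3 : h x - h y - ε * (p y - p x) ≤ 0 := by
      have := hcS.2
      rw [hcey] at this
      simpa using this
    linarith
  by_contra hlt
  push_neg at hlt
  have hd2 : 0 < h x - h y := sub_pos.2 hlt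
  have hkey := main ((h x - h y)/(2*(p y - p x))) (by positivity)
  have heq : (h x - h y)/(2*(p y - p x)) * (p y - p x) = (h x - h y)/2 := by
    field_simp
  rw [heq] at hkey
  linarith

lemma eventually_leftLimFilter_iff {β : EReal} (hβ : ⊥ < β) {P : ℝ → Prop} :
    (∀ᶠ x in leftLimFilter β, P x) ↔
      ∃ a : ℝ, (a : EReal) < β ∧ ∀ x : ℝ, a < x → (x : EReal) < β → P x := by
  constructor
  · intro hP
    rw [Filter.eventually_iff, leftLimFilter, Filter.mem_comap] at hP
    obtain ⟨t, ht, hsub⟩ := hP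
    rw [mem_nhdsLT_iff_exists_Ioo_subset' hβ] at ht
    obtain ⟨l, hl, hIoo⟩ := ht
    obtain ⟨a, hla, haβ⟩ := EReal.lt_iff_exists_real_btwn.1 (Set.mem_Iio.1 hl)
    refine ⟨a, haβ, fun x hax hxβ => ?_⟩
    exact hsub (hIoo ⟨lt_trans hla (EReal.coe_lt_coe_iff.2 hax), hxβ⟩)
  · rintro ⟨a, haβ, hP⟩
    rw [Filter.eventually_iff, leftLimFilter, Filter.mem_comap]
    exact ⟨Set.Ioo (a:EReal) β, Ioo_mem_nhdsLT haβ,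
      fun x hx => hP x (EReal.coe_lt_coe_iff.1 hx.1) hx.2⟩

lemma ratio_lower (α β : EReal) (hαβ : α < β)
    (p f s : ℝ → ℝ)
    (hp_mono : StrictMonoOn p {x : ℝ | α < (x:EReal) ∧ (x:EReal) < β})
    (hp_cont : ContinuousOn p {x : ℝ | α < (x:EReal) ∧ (x:EReal) < β})
    (hf_cont : ContinuousOn f {x : ℝ | α < (x:EReal) ∧ (x:EReal) < β})
    (hs_cont : ContinuousOn s {x : ℝ | α < (x:EReal) ∧ (x:EReal) < β})
    (hs_pos : ∀ x : ℝ, α < (x:EReal) → (x:EReal) < β → 0 < s x)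
    (hs_top : Tendsto s (leftLimFilter β) atTop)
    (Df Ds : ℝ → ℝ)
    (hDf : ∀ x : ℝ, α < (x:EReal) → (x:EReal) < β →
      Tendsto (fun ε => (f (x+ε) - f x)/(p (x+ε) - p x)) (nhdsWithin 0 (Set.Ioi 0)) (nhds (Df x)))
    (hDs : ∀ x : ℝ, α < (x:EReal) → (x:EReal) < β →
      Tendsto (fun ε => (s (x+ε) - s x)/(p (x+ε) - p x)) (nhdsWithin 0 (Set.Ioi 0)) (nhds (Ds x)))
    (c : ℝ) (hc : ∀ᶠ x in leftLimFilter β, c * Ds x ≤ Df x)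
    (m : ℝ) (hm : m < c) :
    ∀ᶠ y in leftLimFilter β, m < f y / s y := by
  have hβ : ⊥ < β := lt_of_le_of_lt bot_le hαβ
  obtain ⟨a1, ha1β, ha1⟩ := (eventually_leftLimFilter_iff hβ).1 hc
  obtain ⟨a0, hαa0, ha0β⟩ := EReal.lt_iff_exists_real_btwn.1 hαβ
  set a := max a0 a1 with ha
  have haβ : (a:EReal) < β := by
    rcases max_choice a0 a1 with hmc|hmc <;> rw [ha, hmc]
    · exact ha0β
    · exact ha1β
  have hαa : α < (a:EReal) :=
    lt_of_lt_of_le hαa0 (EReal.coe_le_coe_iff.2 (le_max_left _ _))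
  obtain ⟨x0, hax0, hx0β⟩ := EReal.lt_iff_exists_real_btwn.1 haβ
  have hax0' : a < x0 := EReal.coe_lt_coe_iff.1 hax0
  have hαx0 : α < (x0 : EReal) := hαa.trans hax0
  have hkey : ∀ y : ℝ, x0 < y → (y:EReal) < β → f x0 - c * s x0 ≤ f y - c * s y := by
    intro y hx0y hyβ
    have hsubset : Set.Icc x0 y ⊆ {x : ℝ | α < (x:EReal) ∧ (x:EReal) < β} := by
      intro t ht
      exact ⟨lt_of_lt_of_le hαx0 (EReal.coe_le_coe_iff.2 ht.1),
        lt_of_le_of_lt (EReal.coe_le_coe_iff.2 ht.2) hyβ⟩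
    apply mvt_aux (fun t => f t - c * s t) p (fun t => Df t - c * Ds t) x0 y hx0y
    · exact (hf_cont.mono hsubset).sub (continuousOn_const.mul (hs_cont.mono hsubset))
    · exact hp_cont.mono hsubset
    · exact hp_mono.mono hsubset
    · intro t ht
      have htm := hsubset ⟨ht.1, ht.2.le⟩
      refine Tendsto.congr (fun ε => ?_)
        ((hDf t htm.1 htm.2).sub ((hDs t htm.1 htm.2).const_mul c))
      ring
    · intro t ht
      have htm := hsubset ⟨ht.1, ht.2.le⟩
      have h4 : a1 < t :=
        lt_of_le_of_lt (le_max_right a0 a1) (lt_of_lt_of_le hax0' ht.1)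
      exact sub_nonneg.2 (ha1 t h4 htm.2)
  set C0 := f x0 - c * s x0 with hC0
  have hKε : 0 < c - m := sub_pos.2 hm
  have hev1 : ∀ᶠ y in leftLimFilter β, x0 < y ∧ (y:EReal) < β :=
    (eventually_leftLimFilter_iff hβ).2 ⟨x0, hx0β, fun y h1 h2 => ⟨h1, h2⟩⟩
  have hev2 : ∀ᶠ y in leftLimFilter β, |C0| / (c - m) < s y :=
    hs_top.eventually (eventually_gt_atTop _)
  filter_upwards [hev1, hev2] with y hy hsy
  have hsy0 : 0 < s y := hs_pos y (hαx0.trans (EReal.coe_lt_coe_iff.2 hy.1)) hy.2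
  have hfy : C0 + c * s y ≤ f y := by
    have := hkey y hy.1 hy.2; rw [hC0]; linarith
  rw [lt_div_iff₀ hsy0]
  have h3 : |C0| < s y * (c - m) := (div_lt_iff₀ hKε).1 hsy
  have h5 : -|C0| ≤ C0 := neg_abs_le C0
  nlinarith

/-- If `ψ_r, ψ_s : (α, β) → (0, ∞)` are continuous, tend to `∞` at `β⁻`, have right
derivatives `D_r = d⁺ψ_r/dp`, `D_s = d⁺ψ_s/dp` with respect to a continuous strictly
increasing `p`, with `D_s > 0` eventually near `β`, and `D_r/D_s → L ∈ [0, ∞]` at `β⁻`,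
then `ψ_r/ψ_s → L` at `β⁻`. -/
theorem ratio_tendsto_of_right_derivative_ratio
    (α β : EReal) (hαβ : α < β)
    (p ψr ψs Dr Ds : ℝ → ℝ)
    (hp_mono : StrictMonoOn p {x : ℝ | α < (x : EReal) ∧ (x : EReal) < β})
    (hp_cont : ContinuousOn p {x : ℝ | α < (x : EReal) ∧ (x : EReal) < β})
    (hψr_pos : ∀ x : ℝ, α < (x : EReal) → (x : EReal) < β → 0 < ψr x)
    (hψs_pos : ∀ x : ℝ, α < (x : EReal) → (x : EReal) < β → 0 < ψs x)
    (hψr_cont : ContinuousOn ψr {x : ℝ | α < (x : EReal) ∧ (x : EReal) < β})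
    (hψs_cont : ContinuousOn ψs {x : ℝ | α < (x : EReal) ∧ (x : EReal) < β})
    (hψr_top : Tendsto ψr (leftLimFilter β) atTop)
    (hψs_top : Tendsto ψs (leftLimFilter β) atTop)
    (hDr : ∀ x : ℝ, α < (x : EReal) → (x : EReal) < β →
      Tendsto (fun ε => (ψr (x + ε) - ψr x) / (p (x + ε) - p x))
        (nhdsWithin 0 (Set.Ioi 0)) (nhds (Dr x)))
    (hDs : ∀ x : ℝ, α < (x : EReal) → (x : EReal) < β →
      Tendsto (fun ε => (ψs (x + ε) - ψs x) / (p (x + ε) - p x))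
        (nhdsWithin 0 (Set.Ioi 0)) (nhds (Ds x)))
    (hDs_pos : ∀ᶠ x in leftLimFilter β, 0 < Ds x)
    (L : EReal) (hL0 : 0 ≤ L)
    (hL : Tendsto (fun x => ((Dr x / Ds x : ℝ) : EReal)) (leftLimFilter β) (nhds L)) :
    Tendsto (fun x => ((ψr x / ψs x : ℝ) : EReal)) (leftLimFilter β) (nhds L) := by
  rw [tendsto_order]
  constructor
  · intro b hb
    induction b using EReal.rec with
    | bot => exact Filter.Eventually.of_forall (fun y => EReal.bot_lt_coe _)
    | coe m =>
        obtain ⟨m', hmm', hm'L⟩ := EReal.lt_iff_exists_real_btwn.1 hb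
        have hc : ∀ᶠ x in leftLimFilter β, m' * Ds x ≤ Dr x := by
          have h1 : ∀ᶠ x in leftLimFilter β, ((m':ℝ) : EReal) < ((Dr x / Ds x : ℝ) : EReal) :=
            hL.eventually (eventually_gt_nhds hm'L)
          filter_upwards [h1, hDs_pos] with x hx hDsx
          have h2 : m' < Dr x / Ds x := EReal.coe_lt_coe_iff.1 hx
          exact le_of_lt ((lt_div_iff₀ hDsx).1 h2)
        have hfin := ratio_lower α β hαβ p ψr ψs hp_mono hp_cont hψr_cont hψs_cont
          hψs_pos hψs_top Dr Ds hDr hDs m' hc m (EReal.coe_lt_coe_iff.1 hmm')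
        filter_upwards [hfin] with y hy
        exact EReal.coe_lt_coe_iff.2 hy
    | top => exact absurd hb (not_lt.2 le_top)
  · intro b hb
    induction b using EReal.rec with
    | bot => exact absurd hb (not_lt.2 bot_le)
    | coe M =>
        obtain ⟨M', hLM', hM'M⟩ := EReal.lt_iff_exists_real_btwn.1 hb
        have hc : ∀ᶠ x in leftLimFilter β, (-M') * (Ds x) ≤ -(Dr x) := by
          have h1 : ∀ᶠ x in leftLimFilter β, ((Dr x / Ds x : ℝ) : EReal) < ((M':ℝ) : EReal) :=
            hL.eventually (eventually_lt_nhds hLM')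
          filter_upwards [h1, hDs_pos] with x hx hDsx
          have h2 : Dr x / Ds x < M' := EReal.coe_lt_coe_iff.1 hx
          have h3 := (div_lt_iff₀ hDsx).1 h2
          linarith
        have hDr' : ∀ x : ℝ, α < (x:EReal) → (x:EReal) < β →
            Tendsto (fun ε => ((fun t => -ψr t) (x+ε) - (fun t => -ψr t) x)/(p (x+ε) - p x))
              (nhdsWithin 0 (Set.Ioi 0)) (nhds ((fun t => -(Dr t)) x)) := by
          intro x h1 h2
          refine Tendsto.congr (fun ε => ?_) (hDr x h1 h2).neg
          simp only
          ring
        have hfin := ratio_lower α β hαβ p (fun t => -ψr t) ψs hp_mono hp_cont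
          hψr_cont.neg hψs_cont hψs_pos hψs_top (fun t => -(Dr t)) Ds hDr' hDs
          (-M') hc (-M) (by have := EReal.coe_lt_coe_iff.1 hM'M; linarith)
        filter_upwards [hfin] with y hy
        have h4 : ψr y / ψs y < M := by
          rw [neg_div] at hy; linarith
        exact EReal.coe_lt_coe_iff.2 h4
    | top => exact Filter.Eventually.of_forall (fun y => EReal.coe_lt_top _)
end

section
/- Suppose f, g : (α, β) → (0, ∞) satisfy, for a fixed x₁ ∈ (α, β), (d⁺f/dp)(x) = a + r ∫_{(x₁, x]} f dm and (d⁺g/dp)(x) = b + s ∫_{(x₁, x]} g dm for all x ∈ [x₁, β), where a, b ∈ ℝ, s > r > 0, and m is a measure on (α, β) with ∫_{(x₁, x]} g dm → ∞ as x → β⁻. If lim_{x→β⁻} f(x)/g(x) = L ∈ [0, ∞) exists and lim_{x→β⁻} (d⁺f/dp)(x)/(d⁺g/dp)(x) = L as well, then L = (r/s)·L, and therefore L = 0. -/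
open Filter Set Topology MeasureTheory
open scoped ENNReal

/-- Final step of the natural-boundary argument: suppose `f, g : (α, β) → (0, ∞)` satisfy,
for a fixed `x₁ ∈ (α, β)`, `(d⁺f/dp)(x) = a + r ∫_{(x₁,x]} f dm` and
`(d⁺g/dp)(x) = b + s ∫_{(x₁,x]} g dm` on `[x₁, β)`, with `s > r > 0` and
`∫_{(x₁,x]} g dm → ∞` as `x → β⁻`. If `f/g → L ∈ [0, ∞)` and `(d⁺f/dp)/(d⁺g/dp) → L`
at `β⁻`, then `L = (r/s) L` and therefore `L = 0`. -/
theorem natural_boundary_ratio_vanishes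
    (α β : EReal) (x₁ : ℝ) (hx₁α : α < (x₁ : EReal)) (hx₁β : (x₁ : EReal) < β)
    (f g Df Dg : ℝ → ℝ) (m : Measure ℝ)
    (a b r s : ℝ) (hr : 0 < r) (hrs : r < s)
    (hf_pos : ∀ x : ℝ, α < (x : EReal) → (x : EReal) < β → 0 < f x)
    (hg_pos : ∀ x : ℝ, α < (x : EReal) → (x : EReal) < β → 0 < g x)
    (hf_meas : Measurable f) (hg_meas : Measurable g)
    (hf_int : ∀ x : ℝ, x₁ < x → (x : EReal) < β → IntegrableOn f (Set.Ioc x₁ x) m)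
    (hg_int : ∀ x : ℝ, x₁ < x → (x : EReal) < β → IntegrableOn g (Set.Ioc x₁ x) m)
    (hDf : ∀ x : ℝ, x₁ ≤ x → (x : EReal) < β →
      Df x = a + r * ∫ y in Set.Ioc x₁ x, f y ∂m)
    (hDg : ∀ x : ℝ, x₁ ≤ x → (x : EReal) < β →
      Dg x = b + s * ∫ y in Set.Ioc x₁ x, g y ∂m)
    (hg_top : Tendsto (fun x => ∫ y in Set.Ioc x₁ x, g y ∂m) (leftLimFilter β) atTop)
    (L : ℝ) (hL0 : 0 ≤ L)
    (hL : Tendsto (fun x => f x / g x) (leftLimFilter β) (nhds L))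
    (hL' : Tendsto (fun x => Df x / Dg x) (leftLimFilter β) (nhds L)) :
    L = (r / s) * L ∧ L = 0 := by
  have hs : (0:ℝ) < s := hr.trans hrs
  set lf := leftLimFilter β with hlf
  set F : ℝ → ℝ := fun x => ∫ y in Set.Ioc x₁ x, f y ∂m with hF
  set G : ℝ → ℝ := fun x => ∫ y in Set.Ioc x₁ x, g y ∂m with hG
  -- the basis of the left-limit filter
  have hbasis : lf.HasBasis (fun c : EReal => c < β)
      (fun c => (fun x : ℝ => (x : EReal)) ⁻¹' Set.Ioo c β) :=
    (nhdsLT_basis_of_exists_lt ⟨(x₁ : EReal), hx₁β⟩).comap _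
  have hne : lf.NeBot := by
    refine hbasis.neBot_iff.mpr ?_
    intro c hc
    obtain ⟨y, hy1, hy2⟩ := EReal.exists_between_coe_real hc
    exact ⟨y, hy1, hy2⟩
  have hmemIoi : ∀ c : ℝ, (c : EReal) < β → ∀ᶠ x : ℝ in lf, c < x := by
    intro c hc
    refine hbasis.eventually_iff.mpr ⟨(c : EReal), hc, fun x hx => ?_⟩
    exact_mod_cast show (c:EReal) < (x:EReal) from hx.1
  have hmemIio : ∀ᶠ x : ℝ in lf, (x : EReal) < β := by
    refine hbasis.eventually_iff.mpr ⟨(x₁ : EReal), hx₁β, fun x hx => hx.2⟩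
  -- the key inequality
  have key : ∀ ε : ℝ, 0 < ε → L ≤ r * (L + ε) / s := by
    intro ε hε
    have h1 : ∀ᶠ x : ℝ in lf, f x / g x < L + ε :=
      hL.eventually (gt_mem_nhds (by linarith))
    have h2 := (h1.and ((hmemIoi x₁ hx₁β).and hmemIio))
    obtain ⟨c, hc, hcP⟩ := hbasis.eventually_iff.mp h2
    -- choose a real point x₀ with c < x₀, x₁ < x₀, x₀ < β
    obtain ⟨x₀, hx₀1, hx₀2⟩ := EReal.exists_between_coe_real (max_lt hc hx₁β)
    have hx₀c : c < (x₀ : EReal) := (le_max_left _ _).trans_lt hx₀1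
    have hx₀x₁ : x₁ < x₀ := by
      have := lt_of_le_of_lt (le_max_right c (x₁:EReal)) hx₀1
      exact_mod_cast this
    -- on (x₀, β), pointwise bound f < (L+ε) g
    have hptwise : ∀ y : ℝ, x₀ < y → (y : EReal) < β → f y ≤ (L + ε) * g y := by
      intro y hy hyβ
      have hyc : (y : EReal) ∈ Set.Ioo c β := ⟨hx₀c.trans (by exact_mod_cast hy), hyβ⟩
      have hP := hcP hyc
      have hgy : 0 < g y := hg_pos y (hx₁α.trans (by exact_mod_cast hx₀x₁.trans hy)) hyβ
      have := hP.1
      rw [div_lt_iff₀ hgy] at this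
      linarith
    set k := r * (L + ε) with hk
    set C := a + r * F x₀ - k * G x₀ with hC
    -- eventual bound Df x ≤ C + k * G x
    have hDfbound : ∀ᶠ x : ℝ in lf, Df x ≤ C + k * G x := by
      filter_upwards [hmemIoi x₀ hx₀2, hmemIio] with x hx hxβ
      have hx₁x : x₁ < x := hx₀x₁.trans hx
      have hintf : IntegrableOn f (Set.Ioc x₁ x) m := hf_int x hx₁x hxβ
      have hintg : IntegrableOn g (Set.Ioc x₁ x) m := hg_int x hx₁x hxβ
      have hsub : Set.Ioc x₀ x ⊆ Set.Ioc x₁ x := Set.Ioc_subset_Ioc_left hx₀x₁.le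
      have hsplitf : F x = F x₀ + ∫ y in Set.Ioc x₀ x, f y ∂m := by
        simp only [hF]
        rw [← Set.Ioc_union_Ioc_eq_Ioc hx₀x₁.le hx.le,
          setIntegral_union (Set.Ioc_disjoint_Ioc_of_le le_rfl) measurableSet_Ioc
            (hf_int x₀ hx₀x₁ hx₀2) (hintf.mono_set hsub)]
      have hsplitg : G x = G x₀ + ∫ y in Set.Ioc x₀ x, g y ∂m := by
        simp only [hG]
        rw [← Set.Ioc_union_Ioc_eq_Ioc hx₀x₁.le hx.le,
          setIntegral_union (Set.Ioc_disjoint_Ioc_of_le le_rfl) measurableSet_Ioc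
            (hg_int x₀ hx₀x₁ hx₀2) (hintg.mono_set hsub)]
      have hmono : (∫ y in Set.Ioc x₀ x, f y ∂m) ≤ ∫ y in Set.Ioc x₀ x, (L + ε) * g y ∂m := by
        refine setIntegral_mono_on (hintf.mono_set hsub)
          ((hintg.mono_set hsub).const_mul _) measurableSet_Ioc ?_
        intro y hy
        exact hptwise y hy.1 (lt_of_le_of_lt (by exact_mod_cast hy.2 : (y:EReal) ≤ x) hxβ)
      rw [integral_const_mul] at hmono
      have hFle : F x ≤ F x₀ + (L + ε) * (G x - G x₀) := by
        rw [hsplitf]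
        have : (∫ y in Set.Ioc x₀ x, g y ∂m) = G x - G x₀ := by rw [hsplitg]; ring
        rw [← this]; linarith
      rw [hDf x hx₁x.le hxβ]
      have : r * F x ≤ r * (F x₀ + (L + ε) * (G x - G x₀)) :=
        mul_le_mul_of_nonneg_left hFle hr.le
      rw [hC, hk]; nlinarith
    -- the comparison function tends to k / s
    have hdenom : Tendsto (fun t : ℝ => b + s * t) atTop atTop :=
      tendsto_atTop_add_const_left _ b (tendsto_id.const_mul_atTop hs)
    have hψ : Tendsto (fun t : ℝ => (C + k * t) / (b + s * t)) atTop (𝓝 (k / s)) := by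
      have h0 : Tendsto (fun t : ℝ => k / s + (C - k * b / s) / (b + s * t)) atTop
          (𝓝 (k / s + 0)) :=
        tendsto_const_nhds.add (tendsto_const_nhds.div_atTop hdenom)
      rw [add_zero] at h0
      refine Tendsto.congr' ?_ h0
      filter_upwards [hdenom.eventually_gt_atTop 0] with t ht
      field_simp
      ring
    have hφ : Tendsto (fun x : ℝ => (C + k * G x) / (b + s * G x)) lf (𝓝 (k / s)) :=
      hψ.comp hg_top
    -- eventually Dg x > 0 and Df/Dg ≤ φ
    have hDgpos : ∀ᶠ x : ℝ in lf, 0 < b + s * G x := by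
      have : Tendsto (fun x : ℝ => b + s * G x) lf atTop :=
        tendsto_atTop_add_const_left _ _ (hg_top.const_mul_atTop hs)
      exact this.eventually_gt_atTop 0
    have hle : ∀ᶠ x : ℝ in lf, Df x / Dg x ≤ (C + k * G x) / (b + s * G x) := by
      filter_upwards [hDfbound, hDgpos, hmemIoi x₁ hx₁β, hmemIio] with x h1 h2 h3 h4
      rw [hDg x h3.le h4]
      gcongr
    exact le_of_tendsto_of_tendsto hL' hφ hle
  -- conclude L ≤ r * L / s and then L = 0
  have hL_le : L ≤ r * L / s := by
    refine le_of_forall_pos_le_add fun ε hε => ?_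
    have := key (ε * s / r) (by positivity)
    calc L ≤ r * (L + ε * s / r) / s := this
      _ = r * L / s + ε := by field_simp
  have hLle0 : L ≤ 0 := by
    by_contra h
    push_neg at h
    have h2 : r * L / s < L := by rw [div_lt_iff₀ hs]; nlinarith
    linarith
  have hL0' : L = 0 := le_antisymm hLle0 hL0
  exact ⟨by rw [hL0']; ring, hL0'⟩
end
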